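/- Let X be a metrizable topological space, let X₀ and A be disjoint closed subsets of X, let n be a natural number, and let g : X → [0,1]ⁿ be a continuous map. Equip the space C(X, [0,1]ⁿ) of continuous maps from X to [0,1]ⁿ and the space C(A, [0,1]ⁿ) of continuous maps from A to [0,1]ⁿ with the uniform convergence topology generated by the Euclidean metric on [0,1]ⁿ. Let H(g) = {h ∈ C(X, [0,1]ⁿ) : h agrees with g on X₀}, viewed as a subspace of C(X, [0,1]ⁿ). Then the restriction map p : H(g) → C(A, [0,1]ⁿ), p(h) = h|A, is surjective and open. -/

import Mathlib

universe u

/-- The unit cube `[0,1]ⁿ` in Euclidean space. -/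
def unitCube (n : ℕ) : Set (EuclideanSpace ℝ (Fin n)) :=
  {x | ∀ i, x i ∈ Set.Icc (0 : ℝ) 1}

namespace RestrAux

noncomputable def clamp (t : ℝ) : ℝ := max 0 (min 1 t)

lemma clamp_mem (t : ℝ) : clamp t ∈ Set.Icc (0 : ℝ) 1 :=
  ⟨le_max_left _ _, max_le zero_le_one (min_le_left _ _)⟩

lemma clamp_of_mem {t : ℝ} (h : t ∈ Set.Icc (0 : ℝ) 1) : clamp t = t := by
  unfold clamp
  rw [min_eq_right h.2, max_eq_right h.1]

lemma clamp_lipschitz (a b : ℝ) : |clamp a - clamp b| ≤ |a - b| := by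
  unfold clamp
  have h1 : |min 1 a - min 1 b| ≤ |a - b| := by
    have := abs_min_sub_min_le_max (1:ℝ) a 1 b
    simpa using this
  calc |max 0 (min 1 a) - max 0 (min 1 b)|
      = |max (min 1 a) 0 - max (min 1 b) 0| := by rw [max_comm (0:ℝ), max_comm (0:ℝ)]
    _ ≤ |min 1 a - min 1 b| := abs_max_sub_max_le_abs _ _ _
    _ ≤ |a - b| := h1

lemma clamp_continuous : Continuous clamp :=
  continuous_const.max (continuous_const.min continuous_id)

lemma coord_dist {n : ℕ} (x y : EuclideanSpace ℝ (Fin n)) (i : Fin n) :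
    |x i - y i| ≤ dist x y := by
  rw [EuclideanSpace.dist_eq]
  rw [← Real.sqrt_sq (abs_nonneg (x i - y i))]
  apply Real.sqrt_le_sqrt
  have : |x i - y i| ^ 2 = dist (x i) (y i) ^ 2 := by rw [Real.dist_eq]
  rw [this]
  exact Finset.single_le_sum (f := fun j => dist (x j) (y j) ^ 2)
    (fun j _ => sq_nonneg _) (Finset.mem_univ i)

lemma cube_dist_le {n : ℕ} (a b : ↥(unitCube n)) : dist a b ≤ Real.sqrt n := by
  rw [Subtype.dist_eq, EuclideanSpace.dist_eq]
  apply Real.sqrt_le_sqrt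
  have h : ∀ i, dist (a.1 i) (b.1 i) ^ 2 ≤ 1 := by
    intro i
    have ha := a.2 i; have hb := b.2 i
    rw [Real.dist_eq]
    have h1 : |a.1 i - b.1 i| ≤ 1 := by
      rw [abs_le]; constructor <;> [linarith [ha.1, hb.2]; linarith [ha.2, hb.1]]
    calc |a.1 i - b.1 i| ^ 2 ≤ 1 ^ 2 := pow_le_pow_left₀ (abs_nonneg _) h1 2
      _ = 1 := one_pow 2
  calc (∑ i, dist (a.1 i) (b.1 i) ^ 2) ≤ ∑ _i : Fin n, (1:ℝ) :=
        Finset.sum_le_sum fun i _ => h i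
    _ = n := by simp

/-- the key construction: given a Urysohn function, every `f` on `A` has a preimage
close to `h`. -/
lemma key {X : Type u} [TopologicalSpace X] [NormalSpace X] {X₀ A : Set X}
    (hA : IsClosed A)
    {n : ℕ} {g : X → ↥(unitCube n)}
    (u : C(X, ℝ)) (hu0 : Set.EqOn u 0 X₀) (hu1 : Set.EqOn u 1 A)
    (huI : ∀ x, u x ∈ Set.Icc (0:ℝ) 1)
    (h : BoundedContinuousFunction X ↥(unitCube n)) (hh : ∀ x ∈ X₀, h x = g x)
    (f : BoundedContinuousFunction ↥A ↥(unitCube n)) :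
    ∃ h' : BoundedContinuousFunction X ↥(unitCube n),
      (∀ x ∈ X₀, h' x = g x) ∧
      h'.compContinuous ⟨Subtype.val, continuous_subtype_val⟩ = f ∧
      dist h' h ≤ Real.sqrt n *
        dist f (h.compContinuous ⟨Subtype.val, continuous_subtype_val⟩) := by
  classical
  set D := dist f (h.compContinuous
      (⟨Subtype.val, continuous_subtype_val⟩ : C(↥A, X))) with hD
  have hD0 : 0 ≤ D := dist_nonneg
  have contf : Continuous fun a : ↥A => (f a : EuclideanSpace ℝ (Fin n)) :=
    continuous_subtype_val.comp f.continuous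
  have conth : Continuous fun x : X => (h x : EuclideanSpace ℝ (Fin n)) :=
    continuous_subtype_val.comp h.continuous
  -- coordinate differences are bounded by D
  have hbound : ∀ (i : Fin n) (a : ↥A),
      ‖(f a : EuclideanSpace ℝ (Fin n)) i - (h a : EuclideanSpace ℝ (Fin n)) i‖ ≤ D := by
    intro i a
    have h1 : |(f a : EuclideanSpace ℝ (Fin n)) i - (h a : EuclideanSpace ℝ (Fin n)) i|
        ≤ dist (f a) ((h.compContinuous
          (⟨Subtype.val, continuous_subtype_val⟩ : C(↥A, X))) a) := by
      have : dist (f a) (h a) = dist (f a : EuclideanSpace ℝ (Fin n)) (h a) :=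
        Subtype.dist_eq _ _
      calc |(f a : EuclideanSpace ℝ (Fin n)) i - (h a : EuclideanSpace ℝ (Fin n)) i|
          ≤ dist (f a : EuclideanSpace ℝ (Fin n)) (h a) := coord_dist _ _ i
        _ = dist (f a) (h a) := (Subtype.dist_eq _ _).symm
        _ = _ := rfl
    exact h1.trans (BoundedContinuousFunction.dist_coe_le_dist a)
  -- the coordinatewise bounded functions and their Tietze extensions
  let φ : Fin n → BoundedContinuousFunction ↥A ℝ := fun i =>
    BoundedContinuousFunction.ofNormedAddCommGroup
      (fun a => (f a : EuclideanSpace ℝ (Fin n)) i - (h a : EuclideanSpace ℝ (Fin n)) i)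
      (((EuclideanSpace.proj i).continuous.comp contf).sub
        (((EuclideanSpace.proj i).continuous.comp conth).comp continuous_subtype_val))
      D (hbound _)
  have hφnorm : ∀ i, ‖φ i‖ ≤ D := fun i =>
    BoundedContinuousFunction.norm_ofNormedAddCommGroup_le _ hD0 _
  choose E hEnorm hErestrict using fun i =>
    BoundedContinuousFunction.exists_norm_eq_restrict_eq_of_closed (φ i) hA
  have hEbound : ∀ (i : Fin n) (x : X), |E i x| ≤ D := by
    intro i x
    calc |E i x| = ‖E i x‖ := rfl
      _ ≤ ‖E i‖ := (E i).norm_coe_le_norm x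
      _ = ‖φ i‖ := hEnorm i
      _ ≤ D := hφnorm i
  have hEA : ∀ (i : Fin n) (a : ↥A), E i a =
      (f a : EuclideanSpace ℝ (Fin n)) i - (h a : EuclideanSpace ℝ (Fin n)) i := by
    intro i a
    have := congrArg (fun k => k a) (hErestrict i)
    exact this
  -- the candidate function
  let v : X → (Fin n → ℝ) := fun x i =>
    clamp ((h x : EuclideanSpace ℝ (Fin n)) i + u x * E i x)
  have hv : Continuous v := by
    apply continuous_pi
    intro i
    exact clamp_continuous.comp
      (((EuclideanSpace.proj i).continuous.comp conth).add (u.continuous.mul (E i).continuous))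
  let w : X → EuclideanSpace ℝ (Fin n) := fun x =>
    (EuclideanSpace.equiv (Fin n) ℝ).symm (v x)
  have hw : Continuous w := (EuclideanSpace.equiv (Fin n) ℝ).symm.continuous.comp hv
  have hwmem : ∀ x, w x ∈ unitCube n := fun x i => clamp_mem _
  have hwi : ∀ x i, w x i = clamp ((h x : EuclideanSpace ℝ (Fin n)) i + u x * E i x) :=
    fun x i => rfl
  -- on X₀ : u = 0, so w x = h x = g x
  have hwX₀ : ∀ x ∈ X₀, w x = (h x : EuclideanSpace ℝ (Fin n)) := by
    intro x hx
    ext i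
    rw [hwi, hu0 hx]
    simp only [Pi.zero_apply, zero_mul, add_zero]
    exact clamp_of_mem ((h x).2 i)
  -- on A : u = 1, so w a = f a
  have hwA : ∀ a : ↥A, w a = (f a : EuclideanSpace ℝ (Fin n)) := by
    intro a
    ext i
    rw [hwi, hu1 a.2, hEA]
    simp only [Pi.one_apply, one_mul]
    rw [add_sub_cancel]
    exact clamp_of_mem ((f a).2 i)
  -- distance bound pointwise
  have hdist : ∀ x, dist (w x) (h x : EuclideanSpace ℝ (Fin n)) ≤ Real.sqrt n * D := by
    intro x
    rw [EuclideanSpace.dist_eq]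
    have hterm : ∀ i, dist (w x i) ((h x : EuclideanSpace ℝ (Fin n)) i) ^ 2 ≤ D ^ 2 := by
      intro i
      have h1 : |w x i - (h x : EuclideanSpace ℝ (Fin n)) i| ≤ D := by
        rw [hwi]
        have hc : (h x : EuclideanSpace ℝ (Fin n)) i =
            clamp ((h x : EuclideanSpace ℝ (Fin n)) i) := (clamp_of_mem ((h x).2 i)).symm
        calc |clamp ((h x : EuclideanSpace ℝ (Fin n)) i + u x * E i x) -
              (h x : EuclideanSpace ℝ (Fin n)) i|
            = |clamp ((h x : EuclideanSpace ℝ (Fin n)) i + u x * E i x) -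
              clamp ((h x : EuclideanSpace ℝ (Fin n)) i)| := by rw [← hc]
          _ ≤ |((h x : EuclideanSpace ℝ (Fin n)) i + u x * E i x) -
              (h x : EuclideanSpace ℝ (Fin n)) i| := clamp_lipschitz _ _
          _ = |u x * E i x| := by ring_nf
          _ = |u x| * |E i x| := abs_mul _ _
          _ ≤ 1 * D := by
              apply mul_le_mul
              · rw [abs_le]; exact ⟨by linarith [(huI x).1], (huI x).2⟩
              · exact hEbound i x
              · exact abs_nonneg _
              · exact zero_le_one
          _ = D := one_mul D
      rw [Real.dist_eq]
      exact pow_le_pow_left₀ (abs_nonneg _) h1 2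
    calc Real.sqrt (∑ i, dist (w x i) ((h x : EuclideanSpace ℝ (Fin n)) i) ^ 2)
        ≤ Real.sqrt (∑ _i : Fin n, D ^ 2) :=
          Real.sqrt_le_sqrt (Finset.sum_le_sum fun i _ => hterm i)
      _ = Real.sqrt (n * D ^ 2) := by rw [Finset.sum_const, Finset.card_univ,
            Fintype.card_fin, nsmul_eq_mul]
      _ = Real.sqrt n * D := by
          rw [Real.sqrt_mul (Nat.cast_nonneg n), Real.sqrt_sq hD0]
  -- assemble the bounded continuous function
  refine ⟨⟨⟨fun x => ⟨w x, hwmem x⟩, hw.subtype_mk _⟩, ?_⟩, ?_, ?_, ?_⟩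
  · exact ⟨Real.sqrt n, fun x y => cube_dist_le _ _⟩
  · intro x hx
    apply Subtype.ext
    show w x = (g x : EuclideanSpace ℝ (Fin n))
    rw [hwX₀ x hx]
    exact congrArg Subtype.val (hh x hx)
  · apply BoundedContinuousFunction.ext
    intro a
    apply Subtype.ext
    show w (a : X) = (f a : EuclideanSpace ℝ (Fin n))
    exact hwA a
  · refine (BoundedContinuousFunction.dist_le (by positivity)).2 fun x => ?_
    rw [Subtype.dist_eq]
    exact hdist x

end RestrAux

/-- Let `X₀` and `A` be disjoint closed subsets of a metrizable space `X` and let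
`g : X → [0,1]ⁿ` be continuous. Then the restriction map `p : H(g) → C(A, [0,1]ⁿ)`,
`p(h) = h|A`, defined on `H(g) = {h ∈ C(X, [0,1]ⁿ) : h|X₀ = g|X₀}` (function spaces
carrying the uniform convergence topology of the Euclidean metric on `[0,1]ⁿ`), is
surjective and open. -/
theorem restriction_map_surjective_and_open
    {X : Type u} [TopologicalSpace X] [TopologicalSpace.MetrizableSpace X]
    (X₀ A : Set X) (hX₀ : IsClosed X₀) (hA : IsClosed A) (hdisj : Disjoint X₀ A)
    (n : ℕ) (g : X → ↥(unitCube n)) (hg : Continuous g) :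
    Function.Surjective
      (fun h : {h : BoundedContinuousFunction X ↥(unitCube n) // ∀ x ∈ X₀, h x = g x} =>
        (h.1.compContinuous ⟨Subtype.val, continuous_subtype_val⟩ :
          BoundedContinuousFunction ↥A ↥(unitCube n))) ∧
    IsOpenMap
      (fun h : {h : BoundedContinuousFunction X ↥(unitCube n) // ∀ x ∈ X₀, h x = g x} =>
        (h.1.compContinuous ⟨Subtype.val, continuous_subtype_val⟩ :
          BoundedContinuousFunction ↥A ↥(unitCube n))) := by
  classical
  haveI : NormalSpace X := by
    letI : MetricSpace X := TopologicalSpace.metrizableSpaceMetric X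
    infer_instance
  obtain ⟨u, hu0, hu1, huI⟩ := exists_continuous_zero_one_of_isClosed hX₀ hA hdisj
  constructor
  · intro f
    let h₀ : BoundedContinuousFunction X ↥(unitCube n) :=
      ⟨⟨g, hg⟩, ⟨Real.sqrt n, fun x y => RestrAux.cube_dist_le _ _⟩⟩
    obtain ⟨h', h'1, h'2, _⟩ := RestrAux.key hA u hu0 hu1 huI h₀ (fun x _ => rfl) f
    exact ⟨⟨h', h'1⟩, h'2⟩
  · intro U hU
    rw [Metric.isOpen_iff]
    rintro f ⟨h, hhU, rfl⟩
    obtain ⟨ε, hε, hball⟩ := Metric.isOpen_iff.mp hU h hhU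
    refine ⟨ε / (Real.sqrt n + 1), by positivity, ?_⟩
    intro f' hf'
    obtain ⟨h', h'1, h'2, h'3⟩ := RestrAux.key hA u hu0 hu1 huI h.1 h.2 f'
    refine ⟨⟨h', h'1⟩, hball ?_, h'2⟩
    rw [Metric.mem_ball, Subtype.dist_eq]
    have hsn : (0:ℝ) ≤ Real.sqrt n := Real.sqrt_nonneg _
    have hd : dist f' (h.1.compContinuous ⟨Subtype.val, continuous_subtype_val⟩) <
        ε / (Real.sqrt n + 1) := by simpa [Metric.mem_ball] using hf'
    calc dist h' h.1
        ≤ Real.sqrt n * dist f' (h.1.compContinuous ⟨Subtype.val, continuous_subtype_val⟩) := h'3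
      _ ≤ Real.sqrt n * (ε / (Real.sqrt n + 1)) := mul_le_mul_of_nonneg_left hd.le hsn
      _ < ε := by
          rw [mul_div_assoc']
          rw [div_lt_iff₀ (by positivity)]
          nlinarith
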